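/- arXiv:1505.00607 — 6 statements merged into one kernel-verified Lean document; each statement's English description precedes it below -/
import Mathlib

section
/- For a proper subdomain G of ℝⁿ (n ≥ 2) whose boundary is not contained in a line, the function v_G(x,y) = sup_{z ∈ ∂G} ∠(x,z,y) (the supremum over boundary points z of the angle at vertex z between the segments [x,z] and [y,z]) defines a metric on G. -/
open Real Set Metric

/-- The visual angle metric: supremum over boundary points `z` of the angle at vertex `z`
between the segments `[x,z]` and `[y,z]`. -/
noncomputable def visualAngle {n : ℕ} (G : Set (EuclideanSpace ℝ (Fin n)))
    (x y : EuclideanSpace ℝ (Fin n)) : ℝ :=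
  sSup ((fun z => EuclideanGeometry.angle x z y) '' frontier G)

/-- The frontier of `G` is contained in some affine line. -/
def FrontierInLine {n : ℕ} (G : Set (EuclideanSpace ℝ (Fin n))) : Prop :=
  ∃ p v : EuclideanSpace ℝ (Fin n), frontier G ⊆ {q | ∃ t : ℝ, q = p + t • v}

open InnerProductGeometry in
/-- Triangle inequality for angles between vectors. -/
lemma angle_triangle_vec {V : Type*} [NormedAddCommGroup V] [InnerProductSpace ℝ V]
    (x y z : V) : angle x z ≤ angle x y + angle y z := by
  by_cases hx : x = 0
  · subst hx
    rw [angle_zero_left, angle_zero_left]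
    have := angle_nonneg y z; linarith
  by_cases hz : z = 0
  · subst hz
    rw [angle_zero_right, angle_zero_right]
    have := angle_nonneg x y; linarith
  by_cases hy : y = 0
  · subst hy
    rw [angle_zero_right, angle_zero_left]
    have := angle_le_pi x z; linarith
  set a := angle x y with ha
  set b := angle y z with hb
  by_cases hab : π ≤ a + b
  · exact le_trans (angle_le_pi x z) hab
  push_neg at hab
  have ha0 : 0 ≤ a := angle_nonneg x y
  have hb0 : 0 ≤ b := angle_nonneg y z
  have hc0 : 0 ≤ angle x z := angle_nonneg x z
  have hcπ : angle x z ≤ π := angle_le_pi x z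
  -- unit vectors
  set u : V := ‖x‖⁻¹ • x with hu
  set v : V := ‖y‖⁻¹ • y with hv
  set w : V := ‖z‖⁻¹ • z with hw
  have hxn : ‖x‖ ≠ 0 := norm_ne_zero_iff.2 hx
  have hyn : ‖y‖ ≠ 0 := norm_ne_zero_iff.2 hy
  have hzn : ‖z‖ ≠ 0 := norm_ne_zero_iff.2 hz
  have hun : ‖u‖ = 1 := by
    rw [hu, norm_smul, norm_inv, norm_norm, inv_mul_cancel₀ hxn]
  have hvn : ‖v‖ = 1 := by
    rw [hv, norm_smul, norm_inv, norm_norm, inv_mul_cancel₀ hyn]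
  have hwn : ‖w‖ = 1 := by
    rw [hw, norm_smul, norm_inv, norm_norm, inv_mul_cancel₀ hzn]
  have huv : inner ℝ u v = Real.cos a := by
    rw [ha, cos_angle, hu, hv, real_inner_smul_left, real_inner_smul_right]
    field_simp
  have hvw : inner ℝ v w = Real.cos b := by
    rw [hb, cos_angle, hv, hw, real_inner_smul_left, real_inner_smul_right]
    field_simp
  have huw : inner ℝ u w = Real.cos (angle x z) := by
    rw [cos_angle, hu, hw, real_inner_smul_left, real_inner_smul_right]
    field_simp
  -- orthogonal parts
  set u' : V := u - (inner ℝ u v : ℝ) • v with hu'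
  set w' : V := w - (inner ℝ w v : ℝ) • v with hw'
  have hvv : (inner ℝ v v : ℝ) = 1 := by
    rw [real_inner_self_eq_norm_sq, hvn]; norm_num
  have huu : (inner ℝ u u : ℝ) = 1 := by
    rw [real_inner_self_eq_norm_sq, hun]; norm_num
  have hww : (inner ℝ w w : ℝ) = 1 := by
    rw [real_inner_self_eq_norm_sq, hwn]; norm_num
  have hinner : (inner ℝ u' w' : ℝ) = inner ℝ u w - (inner ℝ u v : ℝ) * (inner ℝ w v : ℝ) := by
    rw [hu', hw']
    simp only [inner_sub_left, inner_sub_right, real_inner_smul_left, real_inner_smul_right, hvv]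
    rw [real_inner_comm v w]
    ring
  have hnu' : ‖u'‖ ^ 2 = 1 - (inner ℝ u v : ℝ) ^ 2 := by
    rw [← real_inner_self_eq_norm_sq, hu']
    simp only [inner_sub_left, inner_sub_right, real_inner_smul_left, real_inner_smul_right,
      hvv, huu]
    rw [real_inner_comm v u]
    ring
  have hnw' : ‖w'‖ ^ 2 = 1 - (inner ℝ w v : ℝ) ^ 2 := by
    rw [← real_inner_self_eq_norm_sq, hw']
    simp only [inner_sub_left, inner_sub_right, real_inner_smul_left, real_inner_smul_right,
      hvv, hww]
    rw [real_inner_comm v w]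
    ring
  have hsina : 0 ≤ Real.sin a := Real.sin_nonneg_of_nonneg_of_le_pi ha0 (angle_le_pi x y)
  have hsinb : 0 ≤ Real.sin b := Real.sin_nonneg_of_nonneg_of_le_pi hb0 (angle_le_pi y z)
  have hnu : ‖u'‖ = Real.sin a := by
    have h1 : ‖u'‖ ^ 2 = Real.sin a ^ 2 := by
      rw [hnu', huv]
      have := Real.sin_sq_add_cos_sq a
      linarith
    have h2 : ‖u'‖ = Real.sqrt (‖u'‖ ^ 2) := (Real.sqrt_sq (norm_nonneg _)).symm
    rw [h2, h1, Real.sqrt_sq hsina]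
  have hnw : ‖w'‖ = Real.sin b := by
    have h1 : ‖w'‖ ^ 2 = Real.sin b ^ 2 := by
      have hwv : (inner ℝ w v : ℝ) = Real.cos b := by
        rw [real_inner_comm]; exact hvw
      rw [hnw', hwv]
      have := Real.sin_sq_add_cos_sq b
      linarith
    have h2 : ‖w'‖ = Real.sqrt (‖w'‖ ^ 2) := (Real.sqrt_sq (norm_nonneg _)).symm
    rw [h2, h1, Real.sqrt_sq hsinb]
  have hcs : |(inner ℝ u' w' : ℝ)| ≤ ‖u'‖ * ‖w'‖ := abs_real_inner_le_norm u' w'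
  have hkey : Real.cos (a + b) ≤ Real.cos (angle x z) := by
    rw [Real.cos_add]
    have h1 : -(Real.sin a * Real.sin b) ≤ (inner ℝ u' w' : ℝ) := by
      rw [← hnu, ← hnw]
      exact neg_le_of_abs_le hcs
    have hwv : (inner ℝ w v : ℝ) = Real.cos b := by rw [real_inner_comm]; exact hvw
    rw [hinner, huw, huv, hwv] at h1
    linarith
  -- conclude via antitonicity of cos on [0, π]
  by_contra hlt
  push_neg at hlt
  have : Real.cos (angle x z) < Real.cos (a + b) :=
    Real.strictAntiOn_cos ⟨by linarith, hab.le⟩ ⟨hc0, hcπ⟩ hlt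
  linarith

/-- Triangle inequality for angles at a common vertex. -/
lemma angle_triangle_pt {n : ℕ} (x y w z : EuclideanSpace ℝ (Fin n)) :
    EuclideanGeometry.angle x z w ≤
      EuclideanGeometry.angle x z y + EuclideanGeometry.angle y z w :=
  angle_triangle_vec (x -ᵥ z) (y -ᵥ z) (w -ᵥ z)

/-- For a proper subdomain `G` of `ℝⁿ`, `n ≥ 2`, whose boundary is not contained in a line,
the visual angle function is a metric on `G`. -/
theorem visualAngle_is_metric {n : ℕ} (hn : 2 ≤ n)
    (G : Set (EuclideanSpace ℝ (Fin n)))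
    (hopen : IsOpen G) (hconn : IsConnected G) (hproper : G ≠ univ)
    (hline : ¬ FrontierInLine G) :
    (∀ x ∈ G, ∀ y ∈ G, 0 ≤ visualAngle G x y) ∧
    (∀ x ∈ G, ∀ y ∈ G, (visualAngle G x y = 0 ↔ x = y)) ∧
    (∀ x ∈ G, ∀ y ∈ G, visualAngle G x y = visualAngle G y x) ∧
    (∀ x ∈ G, ∀ y ∈ G, ∀ w ∈ G,
      visualAngle G x w ≤ visualAngle G x y + visualAngle G y w) := by
  have hfr : (frontier G).Nonempty :=
    nonempty_frontier_iff.2 ⟨hconn.nonempty, hproper⟩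
  have hbdd : ∀ x y : EuclideanSpace ℝ (Fin n),
      BddAbove ((fun z => EuclideanGeometry.angle x z y) '' frontier G) := by
    intro x y
    refine ⟨π, ?_⟩
    rintro _ ⟨z, _, rfl⟩
    exact EuclideanGeometry.angle_le_pi _ _ _
  have hne : ∀ x y : EuclideanSpace ℝ (Fin n),
      ((fun z => EuclideanGeometry.angle x z y) '' frontier G).Nonempty :=
    fun x y => hfr.image _
  have hnonneg : ∀ x y : EuclideanSpace ℝ (Fin n), 0 ≤ visualAngle G x y := by
    intro x y
    obtain ⟨z, hz⟩ := hfr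
    exact le_trans (EuclideanGeometry.angle_nonneg x z y)
      (le_csSup (hbdd x y) ⟨z, hz, rfl⟩)
  have hle : ∀ (x y : EuclideanSpace ℝ (Fin n)) (z : EuclideanSpace ℝ (Fin n)),
      z ∈ frontier G → EuclideanGeometry.angle x z y ≤ visualAngle G x y :=
    fun x y z hz => le_csSup (hbdd x y) ⟨z, hz, rfl⟩
  have hGdisj : ∀ z ∈ frontier G, z ∉ G := by
    intro z hz hzG
    rw [hopen.frontier_eq] at hz
    exact hz.2 hzG
  refine ⟨fun x _ y _ => hnonneg x y, ?_, ?_, ?_⟩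
  · -- definiteness
    intro x hx y hy
    constructor
    · intro h0
      by_contra hxy
      apply hline
      refine ⟨x, y - x, ?_⟩
      intro z hz
      have hang : EuclideanGeometry.angle x z y = 0 := by
        have h1 := hle x y z hz
        have h2 := EuclideanGeometry.angle_nonneg x z y
        rw [h0] at h1
        linarith
      have hcol : Collinear ℝ ({x, z, y} : Set (EuclideanSpace ℝ (Fin n))) :=
        EuclideanGeometry.collinear_of_angle_eq_zero hang
      have hmem : z ∈ line[ℝ, x, y] :=
        hcol.mem_affineSpan_of_mem_of_ne (by simp) (by simp) (by simp) hxy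
      have : (z - x) +ᵥ x ∈ line[ℝ, x, y] := by
        simpa using hmem
      rw [vadd_left_mem_affineSpan_pair] at this
      obtain ⟨r, hr⟩ := this
      refine ⟨r, ?_⟩
      have : r • (y - x) = z - x := by simpa using hr
      rw [this]
      abel
    · rintro rfl
      have himg : (fun z => EuclideanGeometry.angle x z x) '' frontier G = {0} := by
        apply Subset.antisymm
        · rintro _ ⟨z, hz, rfl⟩
          have hzx : z ≠ x := fun h => hGdisj z hz (h ▸ hx)
          simp [EuclideanGeometry.angle_self_of_ne (Ne.symm hzx)]
        · rintro t ht
          obtain ⟨z, hz⟩ := hfr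
          have hzx : z ≠ x := fun h => hGdisj z hz (h ▸ hx)
          refine ⟨z, hz, ?_⟩
          rw [mem_singleton_iff] at ht
          rw [ht]
          exact EuclideanGeometry.angle_self_of_ne (Ne.symm hzx)
      rw [visualAngle, himg, csSup_singleton]
  · -- symmetry
    intro x _ y _
    unfold visualAngle
    congr 1
    ext t
    constructor
    · rintro ⟨z, hz, rfl⟩
      exact ⟨z, hz, (EuclideanGeometry.angle_comm y z x)⟩
    · rintro ⟨z, hz, rfl⟩
      exact ⟨z, hz, (EuclideanGeometry.angle_comm x z y)⟩
  · -- triangle inequality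
    intro x _ y _ w _
    apply csSup_le (hne x w)
    rintro _ ⟨z, hz, rfl⟩
    calc EuclideanGeometry.angle x z w
        ≤ EuclideanGeometry.angle x z y + EuclideanGeometry.angle y z w :=
          angle_triangle_pt x y w z
      _ ≤ visualAngle G x y + visualAngle G y w :=
          add_le_add (hle x y z hz) (hle y w z hz)
end

section
/- In the unit ball 𝔹ⁿ, for any x ≠ 0 the visual angle distance from 0 to x equals arcsin|x|, i.e. v_{𝔹ⁿ}(0,x) = arcsin|x| ∈ (0, π/2). -/
open Real Set Metric

variable {V : Type*} [NormedAddCommGroup V] [InnerProductSpace ℝ V]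

lemma angle_key (x z : V) (hx1 : ‖x‖ < 1) (hz : ‖z‖ = 1) :
    EuclideanGeometry.angle 0 z x ≤ π / 2 ∧
    Real.sin (EuclideanGeometry.angle 0 z x) * ‖x - z‖ =
      Real.sqrt (‖x‖ ^ 2 - (inner ℝ z x : ℝ) ^ 2) := by
  have hne : x - z ≠ 0 := by
    intro h
    rw [sub_eq_zero] at h
    rw [h, hz] at hx1
    linarith
  have hvpos : 0 < ‖x - z‖ := norm_pos_iff.mpr hne
  have hang : EuclideanGeometry.angle 0 z x = InnerProductGeometry.angle (-z) (x - z) := by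
    rw [EuclideanGeometry.angle, vsub_eq_sub, vsub_eq_sub, zero_sub]
  set t : ℝ := inner ℝ z x with ht
  have hinner : (inner ℝ (-z) (x - z) : ℝ) = 1 - t := by
    rw [inner_neg_left, inner_sub_right, real_inner_self_eq_norm_sq, hz]
    ring
  have htle : t ≤ ‖x‖ := by
    calc t ≤ ‖z‖ * ‖x‖ := real_inner_le_norm z x
    _ = ‖x‖ := by rw [hz, one_mul]
  have hcos : 0 ≤ Real.cos (EuclideanGeometry.angle 0 z x) := by
    rw [hang, InnerProductGeometry.cos_angle, hinner]
    apply div_nonneg (by linarith)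
    positivity
  constructor
  · by_contra h
    push_neg at h
    have h2 : EuclideanGeometry.angle 0 z x ≤ π := EuclideanGeometry.angle_le_pi _ _ _
    have := Real.cos_neg_of_pi_div_two_lt_of_lt h (by linarith [Real.pi_pos])
    linarith
  · have hs := InnerProductGeometry.sin_angle_mul_norm_mul_norm (-z) (x - z)
    rw [hinner, real_inner_self_eq_norm_sq, real_inner_self_eq_norm_sq, norm_neg, hz] at hs
    rw [one_mul] at hs
    rw [hang, hs]
    congr 1
    have hv : ‖x - z‖ ^ 2 = ‖x‖ ^ 2 - 2 * t + 1 := by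
      rw [norm_sub_sq_real, hz, real_inner_comm]
      ring
    nlinarith [hv]

lemma angle_le_arcsin (x z : V) (hx1 : ‖x‖ < 1) (hz : ‖z‖ = 1) :
    EuclideanGeometry.angle 0 z x ≤ Real.arcsin ‖x‖ := by
  obtain ⟨h1, h2⟩ := angle_key x z hx1 hz
  have h0 : 0 ≤ EuclideanGeometry.angle 0 z x := EuclideanGeometry.angle_nonneg _ _ _
  have hne : x - z ≠ 0 := by
    intro h; rw [sub_eq_zero] at h; rw [h, hz] at hx1; linarith
  have hvpos : 0 < ‖x - z‖ := norm_pos_iff.mpr hne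
  have hv : ‖x - z‖ ^ 2 = ‖x‖ ^ 2 - 2 * (inner ℝ z x : ℝ) + 1 := by
    rw [norm_sub_sq_real, hz, real_inner_comm]; ring
  have hsin : Real.sin (EuclideanGeometry.angle 0 z x) ≤ ‖x‖ := by
    have hle : Real.sqrt (‖x‖ ^ 2 - (inner ℝ z x : ℝ) ^ 2) ≤ ‖x‖ * ‖x - z‖ := by
      rw [show ‖x‖ * ‖x - z‖ = Real.sqrt ((‖x‖ * ‖x - z‖) ^ 2) from
        (Real.sqrt_sq (by positivity)).symm]
      apply Real.sqrt_le_sqrt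
      nlinarith [sq_nonneg (‖x‖ ^ 2 - (inner ℝ z x : ℝ))]
    have := h2.le.trans hle
    exact le_of_mul_le_mul_right this hvpos
  calc EuclideanGeometry.angle 0 z x
      = Real.arcsin (Real.sin (EuclideanGeometry.angle 0 z x)) := by
        rw [Real.arcsin_sin (by linarith [Real.pi_pos]) h1]
    _ ≤ Real.arcsin ‖x‖ := Real.monotone_arcsin hsin

lemma angle_eq_arcsin (x z : V) (hx1 : ‖x‖ < 1) (hz : ‖z‖ = 1)
    (hzx : (inner ℝ z x : ℝ) = ‖x‖ ^ 2) :
    EuclideanGeometry.angle 0 z x = Real.arcsin ‖x‖ := by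
  obtain ⟨h1, h2⟩ := angle_key x z hx1 hz
  have h0 : 0 ≤ EuclideanGeometry.angle 0 z x := EuclideanGeometry.angle_nonneg _ _ _
  have hs1 : ‖x‖ ^ 2 < 1 := by nlinarith [norm_nonneg x]
  have hvx : ‖x - z‖ = Real.sqrt (1 - ‖x‖ ^ 2) := by
    rw [show (1 : ℝ) - ‖x‖ ^ 2 = ‖x - z‖ ^ 2 by
      rw [norm_sub_sq_real, hz, real_inner_comm, hzx]; ring]
    exact (Real.sqrt_sq (norm_nonneg _)).symm
  have hrhs : Real.sqrt (‖x‖ ^ 2 - (inner ℝ z x : ℝ) ^ 2) = ‖x‖ * Real.sqrt (1 - ‖x‖ ^ 2) := by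
    rw [hzx, show ‖x‖ ^ 2 - (‖x‖ ^ 2) ^ 2 = ‖x‖ ^ 2 * (1 - ‖x‖ ^ 2) by ring,
      Real.sqrt_mul (sq_nonneg _), Real.sqrt_sq (norm_nonneg _)]
  have hpos : 0 < Real.sqrt (1 - ‖x‖ ^ 2) := Real.sqrt_pos.mpr (by linarith)
  have hsin : Real.sin (EuclideanGeometry.angle 0 z x) = ‖x‖ := by
    rw [hvx, hrhs] at h2
    exact mul_right_cancel₀ hpos.ne' h2
  rw [← hsin, Real.arcsin_sin (by linarith [Real.pi_pos]) h1]

/-- In the unit ball, `v(0,x) = arcsin |x| ∈ (0, π/2)` for `x ≠ 0`. -/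
theorem visualAngle_zero_eq_arcsin {n : ℕ} (hn : 2 ≤ n)
    (x : EuclideanSpace ℝ (Fin n)) (hx : x ∈ ball (0 : EuclideanSpace ℝ (Fin n)) 1)
    (hx0 : x ≠ 0) :
    visualAngle (ball (0 : EuclideanSpace ℝ (Fin n)) 1) 0 x = Real.arcsin ‖x‖ ∧
    Real.arcsin ‖x‖ ∈ Ioo 0 (π / 2) := by
  have hs : ‖x‖ < 1 := by simpa [mem_ball, dist_zero_right] using hx
  haveI : Nontrivial (EuclideanSpace ℝ (Fin n)) := ⟨⟨x, 0, hx0⟩⟩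
  -- find a unit vector orthogonal to x
  have hbot : ((ℝ ∙ x) : Submodule ℝ (EuclideanSpace ℝ (Fin n)))ᗮ ≠ ⊥ := by
    intro hb
    have h1 := Submodule.finrank_add_finrank_orthogonal
      (K := ((ℝ ∙ x) : Submodule ℝ (EuclideanSpace ℝ (Fin n))))
    rw [hb, finrank_bot, finrank_span_singleton hx0, finrank_euclideanSpace_fin] at h1
    omega
  obtain ⟨w, hw, hw0⟩ := Submodule.exists_mem_ne_zero_of_ne_bot hbot
  have hxw : (inner ℝ x w : ℝ) = 0 :=
    (Submodule.mem_orthogonal _ w).mp hw x (Submodule.mem_span_singleton_self x)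
  have hwn : (0 : ℝ) < ‖w‖ := norm_pos_iff.mpr hw0
  set c : ℝ := Real.sqrt (1 - ‖x‖ ^ 2) / ‖w‖ with hc
  set z : EuclideanSpace ℝ (Fin n) := x + c • w with hzdef
  have hs1 : (0 : ℝ) ≤ 1 - ‖x‖ ^ 2 := by nlinarith [norm_nonneg x]
  have hcw : ‖c • w‖ = Real.sqrt (1 - ‖x‖ ^ 2) := by
    rw [norm_smul, Real.norm_of_nonneg (by positivity), hc]
    field_simp
  have hxcw : (inner ℝ x (c • w) : ℝ) = 0 := by
    rw [real_inner_smul_right, hxw, mul_zero]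
  have hz2 : ‖z‖ ^ 2 = 1 := by
    rw [hzdef, norm_add_sq_real, hxcw, hcw, Real.sq_sqrt hs1]; ring
  have hz1 : ‖z‖ = 1 := by
    rw [← Real.sqrt_sq (norm_nonneg z), hz2, Real.sqrt_one]
  have hzx : (inner ℝ z x : ℝ) = ‖x‖ ^ 2 := by
    rw [hzdef, inner_add_left, real_inner_self_eq_norm_sq, real_inner_smul_left,
      real_inner_comm, hxw]
    ring
  have heq := angle_eq_arcsin x z hs hz1 hzx
  refine ⟨?_, Real.arcsin_pos.mpr (norm_pos_iff.mpr hx0), Real.arcsin_lt_pi_div_two.mpr hs⟩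
  rw [visualAngle, frontier_ball (0 : EuclideanSpace ℝ (Fin n)) one_ne_zero]
  apply IsGreatest.csSup_eq
  constructor
  · exact ⟨z, mem_sphere_zero_iff_norm.mpr hz1, heq⟩
  · rintro a ⟨z', hz', rfl⟩
    exact angle_le_arcsin x z' hs (mem_sphere_zero_iff_norm.mp hz')
end

section
/- In the unit ball 𝔹ⁿ, if |x| = |y| ≠ 0 and θ = (1/2)∠(x,0,y) ∈ (0, π/2], then v_{𝔹ⁿ}(x,y) = 2 arctan( |x| sin θ / (1 − |x| cos θ) ). -/
set_option maxHeartbeats 1000000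

open Real Set Metric
open scoped RealInnerProductSpace

private lemma sq_eq_of_nonneg' {a b : ℝ} (ha : 0 ≤ a) (hb : 0 ≤ b) (h : a^2 = b^2) : a = b := by
  nlinarith [sq_nonneg (a-b), sq_nonneg (a+b)]

private lemma le_of_sq_le_sq' {a b : ℝ} (ha : 0 ≤ a) (hb : 0 ≤ b) (h : a^2 ≤ b^2) : a ≤ b := by
  nlinarith [sq_nonneg (a-b), sq_nonneg (a+b)]

private lemma key_scalar (r c s2 u d D K A B : ℝ)
    (hr0 : 0 < r) (hr1 : r < 1) (hc0 : 0 ≤ c) (hs2 : s2 = 1 - c^2) (hs2pos : 0 < s2)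
    (hD : D = 1 - 2*r*c + r^2) (hK : K = 1 - 2*r*c + r^2*(2*c^2-1))
    (hu0 : 0 ≤ u) (hA0 : 0 ≤ A) (hB0 : 0 ≤ B)
    (hA : A^2 = D + u - d) (hB : B^2 = D + u + d)
    (hC : (2*r*c - u)^2*(4*r^2*s2) + d^2*(2*r*c)^2 ≤ (2*r*c)^2*(4*r^2*s2)) :
    K*(A*B) ≤ D*(K+u) := by
  have hc1 : c < 1 := by nlinarith
  have hrc : r*c < 1 := by nlinarith
  have hD0 : 0 < D := by nlinarith
  have hab2 : (A*B)^2 = (D+u)^2 - d^2 := by rw [mul_pow, hA, hB]; ring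
  have hAB0 : 0 ≤ A*B := mul_nonneg hA0 hB0
  by_cases hKs : 0 ≤ K
  · have hABle : A*B ≤ D + u := by
      have h1 : (A*B)^2 ≤ (D+u)^2 := by nlinarith [sq_nonneg d]
      exact le_of_sq_le_sq' hAB0 (by linarith) h1
    have h3 : K*(A*B) ≤ K*(D+u) := mul_le_mul_of_nonneg_left hABle hKs
    have hDK : K ≤ D := by nlinarith
    nlinarith [mul_nonneg hu0 (sub_nonneg.mpr hDK)]
  · push_neg at hKs
    by_cases hKu : 0 ≤ K + u
    · have : K*(A*B) ≤ 0 := mul_nonpos_of_nonpos_of_nonneg (le_of_lt hKs) hAB0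
      nlinarith [mul_nonneg (le_of_lt hD0) hKu]
    · push_neg at hKu
      have h2rc : 1 - r^2 < 2*r*c := by nlinarith [sq_nonneg (r*c)]
      have hcpos : 0 < c := by
        by_contra hcc
        push_neg at hcc
        nlinarith [mul_nonpos_of_nonneg_of_nonpos (le_of_lt hr0) hcc]
      have hP0 : 0 < 2*r*c := by positivity
      have hP2 : (0:ℝ) < (2*r*c)^2 := by positivity
      have h1 : d^2*(2*r*c)^2 ≤ (4*r^2*s2)*(u*(2*(2*r*c) - u)) := by nlinarith [hC]
      have hEid : (2*r*c)^2*(K^2*((D+u)^2 - d^2) - D^2*(K+u)^2)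
          = u*(8*(2*r*c)*r^2*s2*(1-r^2)*(1-r*c)*(-K-u) + 4*r^2*s2*(1-r^2)^2*u)
            + K^2*((4*r^2*s2)*(u*(2*(2*r*c) - u)) - (2*r*c)^2*d^2) := by
        subst hs2 hD hK; ring
      have hterm1 : 0 ≤ u*(8*(2*r*c)*r^2*s2*(1-r^2)*(1-r*c)*(-K-u) + 4*r^2*s2*(1-r^2)^2*u) := by
        have hKmu : (0:ℝ) ≤ -K - u := by linarith
        have w1 : (0:ℝ) ≤ 1 - r^2 := by nlinarith
        have w2 : (0:ℝ) ≤ 1 - r*c := by nlinarith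
        have f1 : 0 ≤ 8*(2*r*c)*r^2*s2*(1-r^2)*(1-r*c)*(-K-u) := by
          refine mul_nonneg (mul_nonneg (mul_nonneg (mul_nonneg (mul_nonneg ?_ ?_) ?_) ?_) ?_) hKmu
          · positivity
          · positivity
          · linarith
          · exact w1
          · exact w2
        have f2 : 0 ≤ 4*r^2*s2*(1-r^2)^2*u := by
          refine mul_nonneg (mul_nonneg (mul_nonneg ?_ ?_) ?_) hu0 <;> positivity
        exact mul_nonneg hu0 (by linarith)
      have hterm2 : 0 ≤ K^2*((4*r^2*s2)*(u*(2*(2*r*c) - u)) - (2*r*c)^2*d^2) := by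
        have := sq_nonneg K
        nlinarith [h1]
      have hdiff : 0 ≤ K^2*((D+u)^2 - d^2) - D^2*(K+u)^2 := by
        have h0 : 0 ≤ (2*r*c)^2*(K^2*((D+u)^2 - d^2) - D^2*(K+u)^2) := by
          rw [hEid]; linarith
        exact (mul_nonneg_iff_of_pos_left hP2).mp h0
      have hsq : (D*(-(K+u)))^2 ≤ ((-K)*(A*B))^2 := by
        have e1 : ((-K)*(A*B))^2 = K^2*((D+u)^2 - d^2) := by rw [mul_pow, hab2]; ring
        have e2 : (D*(-(K+u)))^2 = D^2*(K+u)^2 := by ring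
        rw [e1, e2]; linarith
      have hle : D*(-(K+u)) ≤ (-K)*(A*B) := by
        refine le_of_sq_le_sq' ?_ (mul_nonneg (by linarith) hAB0) hsq
        have : 0 < -(K+u) := by linarith
        positivity
      linarith [hle]

private lemma bessel_two {E : Type*} [NormedAddCommGroup E] [InnerProductSpace ℝ E]
    (p q z : E) (hpq : ⟪p, q⟫ = 0) (hz : ‖z‖ = 1) :
    ⟪p, z⟫^2 * ‖q‖^2 + ⟪q, z⟫^2 * ‖p‖^2 ≤ ‖p‖^2 * ‖q‖^2 := by
  rcases eq_or_ne p 0 with rfl | hp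
  · simp
  rcases eq_or_ne q 0 with rfl | hq
  · simp
  have ha : (0:ℝ) < ‖p‖^2 := pow_pos (norm_pos_iff.mpr hp) 2
  have hb : (0:ℝ) < ‖q‖^2 := pow_pos (norm_pos_iff.mpr hq) 2
  set a := ‖p‖^2
  set b := ‖q‖^2
  set sp := ⟪p, z⟫
  set sq := ⟪q, z⟫
  have h := real_inner_self_nonneg (x := (a*b) • z - (b*sp) • p - (a*sq) • q)
  have hexp : ⟪(a*b) • z - (b*sp) • p - (a*sq) • q, (a*b) • z - (b*sp) • p - (a*sq) • q⟫
      = (a*b)^2 - a*b^2*sp^2 - a^2*b*sq^2 := by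
    have hzz : ⟪z, z⟫ = 1 := by
      rw [real_inner_self_eq_norm_sq, hz]; norm_num
    have hpp : ⟪p, p⟫ = a := real_inner_self_eq_norm_sq p
    have hqq : ⟪q, q⟫ = b := real_inner_self_eq_norm_sq q
    have hqp : ⟪q, p⟫ = 0 := by rw [real_inner_comm]; exact hpq
    have hzp : ⟪z, p⟫ = sp := real_inner_comm p z
    have hzq : ⟪z, q⟫ = sq := real_inner_comm q z
    simp only [inner_sub_left, inner_sub_right, real_inner_smul_left, real_inner_smul_right,
      hzz, hpp, hqq, hpq, hqp, hzp, hzq]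
    ring
  rw [hexp] at h
  nlinarith [h, mul_pos ha hb]

private lemma exists_unit_orthogonal {n : ℕ} (hn : 2 ≤ n)
    (x : EuclideanSpace ℝ (Fin n)) (hx0 : x ≠ 0) :
    ∃ z : EuclideanSpace ℝ (Fin n), ‖z‖ = 1 ∧ ⟪x, z⟫ = 0 := by
  set W := (Submodule.span ℝ {x})ᗮ with hW
  have hfin : Module.finrank ℝ (Submodule.span ℝ {x} : Submodule ℝ (EuclideanSpace ℝ (Fin n)))
      + Module.finrank ℝ W = n := by
    rw [hW, Submodule.finrank_add_finrank_orthogonal, finrank_euclideanSpace_fin]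
  rw [finrank_span_singleton hx0] at hfin
  have hWpos : 0 < Module.finrank ℝ W := by omega
  obtain ⟨v, hv0⟩ := Module.finrank_pos_iff_exists_ne_zero.mp hWpos
  have hvne : (v : EuclideanSpace ℝ (Fin n)) ≠ 0 := fun h => hv0 (Subtype.coe_injective h)
  have hvW : (v : EuclideanSpace ℝ (Fin n)) ∈ W := v.2
  have hxv : ⟪x, (v : EuclideanSpace ℝ (Fin n))⟫ = 0 :=
    (Submodule.mem_orthogonal _ _).mp hvW x (Submodule.mem_span_singleton_self x)
  refine ⟨‖(v : EuclideanSpace ℝ (Fin n))‖⁻¹ • (v : EuclideanSpace ℝ (Fin n)), ?_, ?_⟩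
  · rw [norm_smul, norm_inv, norm_norm, inv_mul_cancel₀ (norm_ne_zero_iff.mpr hvne)]
  · rw [real_inner_smul_right, hxv, mul_zero]

/-- In the unit ball, for `|x| = |y| ≠ 0` and `θ = ∠(x,0,y)/2 ∈ (0, π/2]`,
`v(x,y) = 2 arctan(|x| sin θ / (1 − |x| cos θ))`. -/
theorem visualAngle_eq_of_norm_eq {n : ℕ} (hn : 2 ≤ n)
    (x y : EuclideanSpace ℝ (Fin n))
    (hx : x ∈ ball (0 : EuclideanSpace ℝ (Fin n)) 1)
    (hy : y ∈ ball (0 : EuclideanSpace ℝ (Fin n)) 1)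
    (hnorm : ‖x‖ = ‖y‖) (hx0 : x ≠ 0)
    (θ : ℝ) (hθ : θ = EuclideanGeometry.angle x 0 y / 2) (hθmem : θ ∈ Ioc 0 (π / 2)) :
    visualAngle (ball (0 : EuclideanSpace ℝ (Fin n)) 1) x y =
      2 * Real.arctan (‖x‖ * Real.sin θ / (1 - ‖x‖ * Real.cos θ)) := by
  obtain ⟨hθ0, hθπ⟩ := hθmem
  set r := ‖x‖ with hrdef
  set c := Real.cos θ with hcdef
  set s := Real.sin θ with hsdef
  have hr1 : r < 1 := mem_ball_zero_iff.mp hx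
  have hxr : ‖x‖ = r := hrdef.symm
  have hyr : ‖y‖ = r := hnorm.symm
  have hr0 : 0 < r := norm_pos_iff.mpr hx0
  have hs0 : 0 < s := Real.sin_pos_of_pos_of_lt_pi hθ0 (by nlinarith [Real.pi_pos])
  have hc0 : 0 ≤ c := Real.cos_nonneg_of_mem_Icc ⟨by linarith, hθπ⟩
  have hs2 : s^2 = 1 - c^2 := by
    rw [hsdef, hcdef]; nlinarith [Real.sin_sq_add_cos_sq θ]
  have hrc1 : r*c < 1 := by nlinarith [Real.cos_le_one θ]
  -- inner product of x and y
  have hang : EuclideanGeometry.angle x 0 y = 2*θ := by rw [hθ]; ring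
  have hangeq : EuclideanGeometry.angle x 0 y = InnerProductGeometry.angle x y := by
    show InnerProductGeometry.angle (x - 0) (y - 0) = _
    rw [sub_zero, sub_zero]
  have hi12 : ⟪x, y⟫ = r^2*(2*c^2-1) := by
    have h1 := InnerProductGeometry.cos_angle x y
    rw [← hangeq, hang] at h1
    rw [Real.cos_two_mul, hxr, hyr] at h1
    have h2 : ⟪x, y⟫ = (2*c^2-1) * (r*r) := by
      rw [eq_comm, div_eq_iff (by positivity : r*r ≠ 0)] at h1
      linarith [h1]
    rw [h2]; ring
  set D : ℝ := 1 - 2*r*c + r^2 with hDdef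
  set K : ℝ := 1 - 2*r*c + r^2*(2*c^2-1) with hKdef
  have hD0 : 0 < D := by rw [hDdef]; nlinarith
  set t : ℝ := r*s/(1-r*c) with htdef
  set α : ℝ := 2*Real.arctan t with hαdef
  have ht0 : 0 ≤ t := div_nonneg (by positivity) (by linarith)
  have hα0 : 0 ≤ α := by
    rw [hαdef]
    have : 0 ≤ Real.arctan t := by rw [← Real.arctan_zero]; exact Real.arctan_strictMono.monotone ht0
    linarith
  have hαπ : α ≤ π := by
    rw [hαdef]
    have := Real.arctan_lt_pi_div_two t
    linarith
  have hαmem : α ∈ Icc 0 π := ⟨hα0, hαπ⟩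
  -- cos α = K / D
  have ht2q : t^2*(1-r*c)^2 = r^2*(1-c^2) := by
    rw [htdef]
    have h1 : (1 - r*c) ≠ 0 := by linarith
    field_simp
    linear_combination hs2
  have hkey : (1 - t^2)*D = K*(1+t^2) := by
    linear_combination (-2:ℝ) * ht2q + (1-t^2)*hDdef - (1+t^2)*hKdef
  have hcosα : Real.cos α = K/D := by
    rw [hαdef, Real.cos_two_mul, Real.cos_arctan]
    have h1 : (0:ℝ) < 1 + t^2 := by positivity
    rw [div_pow, one_pow, Real.sq_sqrt (by positivity : (0:ℝ) ≤ 1 + t^2)]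
    rw [eq_div_iff (ne_of_gt hD0)]
    field_simp
    linear_combination hkey
  -- upper bound
  have hub : ∀ z : EuclideanSpace ℝ (Fin n), ‖z‖ = 1 →
      EuclideanGeometry.angle x z y ≤ α := by
    intro z hz
    set u : ℝ := 2*r*c - (⟪x,z⟫ + ⟪y,z⟫) with hudef
    set d : ℝ := ⟪x,z⟫ - ⟪y,z⟫ with hddef
    set A : ℝ := ‖x - z‖ with hAdef
    set B : ℝ := ‖y - z‖ with hBdef
    have hxz : x ≠ z := by
      intro h; rw [← h] at hz; exact absurd hz (ne_of_lt hr1)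
    have hyz : y ≠ z := by
      intro h; rw [← h] at hz
      rw [← hnorm] at hz
      exact absurd hz (ne_of_lt hr1)
    have hApos : 0 < A := by rw [hAdef]; exact norm_pos_iff.mpr (sub_ne_zero.mpr hxz)
    have hBpos : 0 < B := by rw [hBdef]; exact norm_pos_iff.mpr (sub_ne_zero.mpr hyz)
    have hA2 : A^2 = D + u - d := by
      rw [hAdef, norm_sub_sq_real, hxr, hz]
      linear_combination hDdef + hudef - hddef
    have hB2 : B^2 = D + u + d := by
      rw [hBdef, norm_sub_sq_real, hyr, hz]
      linear_combination hDdef + hudef + hddef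
    have hxy : ‖x + y‖ = 2*r*c := by
      refine sq_eq_of_nonneg' (norm_nonneg _) (by positivity) ?_
      rw [norm_add_sq_real, hxr, hyr, hi12]
      ring
    have hu0 : 0 ≤ u := by
      have h1 : ⟪x + y, z⟫ ≤ ‖x + y‖ * ‖z‖ := real_inner_le_norm _ _
      rw [hxy, hz, mul_one, inner_add_left] at h1
      rw [hudef]; linarith
    have hpq : ⟪x + y, x - y⟫ = 0 := by
      rw [inner_sub_right, inner_add_left, inner_add_left,
        real_inner_self_eq_norm_sq, real_inner_self_eq_norm_sq,
        real_inner_comm y x, hxr, hyr]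
      ring
    have hq2 : ‖x - y‖^2 = 4*r^2*s^2 := by
      rw [norm_sub_sq_real, hxr, hyr, hi12]
      linear_combination (-4*r^2) * hs2
    have hC : (2*r*c - u)^2*(4*r^2*s^2) + d^2*(2*r*c)^2 ≤ (2*r*c)^2*(4*r^2*s^2) := by
      have hb := bessel_two (x+y) (x-y) z hpq hz
      have e1 : ⟪x+y, z⟫ = 2*r*c - u := by rw [inner_add_left, hudef]; ring
      have e2 : ⟪x-y, z⟫ = d := by rw [inner_sub_left, hddef]
      rw [e1, e2, hq2, hxy] at hb
      linarith [hb]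
    have hinner : ⟪x - z, y - z⟫ = K + u := by
      simp only [inner_sub_left, inner_sub_right]
      rw [real_inner_comm y z, real_inner_self_eq_norm_sq, hz]
      linear_combination hi12 - hKdef - hudef
    have hks := key_scalar r c (s^2) u d D K A B hr0 hr1 hc0 hs2 (by positivity)
      hDdef hKdef hu0 (le_of_lt hApos) (le_of_lt hBpos) hA2 hB2 hC
    -- compare angles via cosine
    have hABpos : 0 < A*B := mul_pos hApos hBpos
    have hcosz : Real.cos (EuclideanGeometry.angle x z y) = (K+u)/(A*B) := by
      have h1 : EuclideanGeometry.angle x z y = InnerProductGeometry.angle (x - z) (y - z) := rfl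
      rw [h1, InnerProductGeometry.cos_angle, hinner, hAdef, hBdef]
    have hcmp : K/D ≤ (K+u)/(A*B) := by
      rw [div_le_div_iff₀ hD0 hABpos]
      linarith [hks]
    by_contra hcon
    push_neg at hcon
    have hzmem : EuclideanGeometry.angle x z y ∈ Icc 0 π :=
      ⟨EuclideanGeometry.angle_nonneg x z y, EuclideanGeometry.angle_le_pi x z y⟩
    have := Real.strictAntiOn_cos hαmem hzmem hcon
    rw [hcosz, hcosα] at this
    linarith
  -- attainment
  have hex : ∃ z : EuclideanSpace ℝ (Fin n), ‖z‖ = 1 ∧ ⟪x,z⟫ = r*c ∧ ⟪y,z⟫ = r*c := by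
    by_cases hp : x + y = 0
    · have hyx : y = -x := by
        have := hp
        rw [add_eq_zero_iff_eq_neg] at this
        rw [this]; simp
      have hxy2 : ⟪x, y⟫ = -(r^2) := by
        rw [hyx, inner_neg_right, real_inner_self_eq_norm_sq, hxr]
      have hceq : c = 0 := by
        have h2 : r^2 * c^2 = 0 := by linear_combination (-1/2 : ℝ)*hi12 + (1/2 : ℝ)*hxy2
        rcases mul_eq_zero.mp h2 with h | h
        · exact absurd h (by positivity)
        · exact pow_eq_zero_iff (by norm_num) |>.mp h
      obtain ⟨z, hz1, hz2⟩ := exists_unit_orthogonal hn x hx0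
      refine ⟨z, hz1, ?_, ?_⟩
      · rw [hz2, hceq, mul_zero]
      · rw [hyx, inner_neg_left, hz2, hceq, mul_zero, neg_zero]
    · have hxy : ‖x + y‖ = 2*r*c := by
        refine sq_eq_of_nonneg' (norm_nonneg _) (by positivity) ?_
        rw [norm_add_sq_real, hxr, hyr, hi12]
        ring
      have hcpos : 0 < c := by
        rcases lt_or_eq_of_le hc0 with h | h
        · exact h
        · exfalso
          apply hp
          rw [← norm_eq_zero, hxy, ← h]
          ring
      have hnz : ‖x + y‖ ≠ 0 := norm_ne_zero_iff.mpr hp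
      refine ⟨‖x+y‖⁻¹ • (x+y), ?_, ?_, ?_⟩
      · rw [norm_smul, norm_inv, norm_norm, inv_mul_cancel₀ hnz]
      · have hcne : c ≠ 0 := ne_of_gt hcpos
        have hrne : r ≠ 0 := ne_of_gt hr0
        rw [real_inner_smul_right, inner_add_right, real_inner_self_eq_norm_sq, hxr, hi12, hxy]
        field_simp
        ring
      · have hcne : c ≠ 0 := ne_of_gt hcpos
        have hrne : r ≠ 0 := ne_of_gt hr0
        rw [real_inner_smul_right, inner_add_right, real_inner_self_eq_norm_sq,
          real_inner_comm x y, hi12, hyr, hxy]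
        field_simp
        ring
  obtain ⟨z, hz1, hzx, hzy⟩ := hex
  have hA2 : ‖x - z‖^2 = D := by
    rw [norm_sub_sq_real, hxr, hz1, hzx]
    linear_combination hDdef
  have hB2 : ‖y - z‖^2 = D := by
    rw [norm_sub_sq_real, hyr, hz1, hzy]
    linear_combination hDdef
  have hABD : ‖x - z‖ * ‖y - z‖ = D := by
    refine sq_eq_of_nonneg' (mul_nonneg (norm_nonneg _) (norm_nonneg _)) (le_of_lt hD0) ?_
    rw [mul_pow, hA2, hB2]
    ring
  have hinnz : ⟪x - z, y - z⟫ = K := by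
    simp only [inner_sub_left, inner_sub_right]
    rw [real_inner_comm y z, real_inner_self_eq_norm_sq, hz1, hzx, hzy]
    linear_combination hi12 - hKdef
  have hcosz : Real.cos (EuclideanGeometry.angle x z y) = K/D := by
    have h1 : EuclideanGeometry.angle x z y = InnerProductGeometry.angle (x - z) (y - z) := rfl
    rw [h1, InnerProductGeometry.cos_angle, hinnz, hABD]
  have hzang : EuclideanGeometry.angle x z y = α := by
    have hzmem : EuclideanGeometry.angle x z y ∈ Icc 0 π :=
      ⟨EuclideanGeometry.angle_nonneg x z y, EuclideanGeometry.angle_le_pi x z y⟩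
    refine Real.injOn_cos hzmem hαmem ?_
    rw [hcosz, hcosα]
  -- conclude
  haveI : Nontrivial (EuclideanSpace ℝ (Fin n)) := nontrivial_of_ne x 0 hx0
  unfold visualAngle
  rw [frontier_ball (0 : EuclideanSpace ℝ (Fin n)) (one_ne_zero)]
  refine IsGreatest.csSup_eq ⟨⟨z, mem_sphere_zero_iff_norm.mpr hz1, hzang⟩, ?_⟩
  rintro a ⟨w, hw, rfl⟩
  exact hub w (mem_sphere_zero_iff_norm.mp hw)
end

section
/- The function f(r) = arcsin r / log(1+r) is strictly increasing on (0,1), with limit 1 as r → 0⁺ and value π/log 4 as r → 1⁻. In particular, for all r ∈ (0,1), log(1+r) ≤ arcsin r ≤ (π/log 4) log(1+r). -/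
open Real Set Filter Topology

private lemma aux_key_ineq {r : ℝ} (hr : r ∈ Ioo (0:ℝ) 1) :
    Real.sqrt (1 - r ^ 2) * Real.arcsin r < (1 + r) * Real.log (1 + r) := by
  set h : ℝ → ℝ := fun x => (1 + x) * Real.log (1 + x) - Real.sqrt (1 - x ^ 2) * Real.arcsin x
    with hh
  have hmono : StrictMonoOn h (Icc 0 1) := by
    apply strictMonoOn_of_deriv_pos (convex_Icc 0 1)
    · apply ContinuousOn.sub
      · apply ContinuousOn.mul (by fun_prop)
        apply ContinuousOn.log (by fun_prop)
        intro x hx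
        have := hx.1
        intro hcon
        linarith
      · exact ((Real.continuous_sqrt.comp (by continuity)).mul
          Real.continuous_arcsin).continuousOn
    · intro x hx
      rw [interior_Icc] at hx
      obtain ⟨hx0, hx1⟩ := hx
      have hx1' : x ≠ 1 := ne_of_lt hx1
      have hxn1 : x ≠ -1 := by intro hcon; rw [hcon] at hx0; linarith
      have h1x2 : (0:ℝ) < 1 - x ^ 2 := by nlinarith
      have hs : 0 < Real.sqrt (1 - x ^ 2) := Real.sqrt_pos.mpr h1x2
      have h1x : (0:ℝ) < 1 + x := by linarith
      have dlin : HasDerivAt (fun y : ℝ => 1 + y) 1 x := (hasDerivAt_id x).const_add 1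
      have dlog : HasDerivAt (fun y : ℝ => Real.log (1 + y)) (1 / (1 + x)) x := by
        have := (Real.hasDerivAt_log (ne_of_gt h1x)).comp x dlin
        simpa [one_div, Function.comp_def] using this
      have d1 : HasDerivAt (fun y : ℝ => (1 + y) * Real.log (1 + y))
          (Real.log (1 + x) + 1) x := by
        have := dlin.mul dlog
        refine this.congr_deriv ?_
        field_simp
      have d2 : HasDerivAt (fun y : ℝ => Real.sqrt (1 - y ^ 2))
          (-x / Real.sqrt (1 - x ^ 2)) x := by
        have hinner : HasDerivAt (fun y : ℝ => 1 - y ^ 2) (-(2 * x)) x := by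
          simpa using ((hasDerivAt_pow 2 x).const_sub 1)
        have := (Real.hasDerivAt_sqrt (ne_of_gt h1x2)).comp x hinner
        refine this.congr_deriv ?_
        field_simp
      have d3 : HasDerivAt Real.arcsin (1 / Real.sqrt (1 - x ^ 2)) x :=
        Real.hasDerivAt_arcsin hxn1 hx1'
      have dh : HasDerivAt h
          (Real.log (1 + x) + x * Real.arcsin x / Real.sqrt (1 - x ^ 2)) x := by
        have := d1.sub (d2.mul d3)
        refine this.congr_deriv ?_
        field_simp
        ring
      rw [dh.deriv]
      have harcsin : 0 < Real.arcsin x := Real.arcsin_pos.mpr hx0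
      have hlog : 0 < Real.log (1 + x) := Real.log_pos (by linarith)
      positivity
  have h0 : h 0 = 0 := by simp [hh]
  have hlt := hmono (left_mem_Icc.mpr zero_le_one)
    ⟨hr.1.le, hr.2.le⟩ hr.1
  rw [h0] at hlt
  simp only [hh] at hlt
  linarith

private lemma aux_mono :
    StrictMonoOn (fun r : ℝ => Real.arcsin r / Real.log (1 + r)) (Ioo 0 1) := by
  apply strictMonoOn_of_deriv_pos (convex_Ioo 0 1)
  · apply ContinuousOn.div Real.continuous_arcsin.continuousOn
    · apply ContinuousOn.log (by fun_prop)
      intro x hx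
      have := hx.1
      intro hcon
      linarith
    · intro x hx
      exact (Real.log_pos (by linarith [hx.1])).ne'
  · intro x hx
    rw [interior_Ioo] at hx
    obtain ⟨hx0, hx1⟩ := hx
    have hx1' : x ≠ 1 := ne_of_lt hx1
    have hxn1 : x ≠ -1 := by intro hcon; rw [hcon] at hx0; linarith
    have h1x2 : (0:ℝ) < 1 - x ^ 2 := by nlinarith
    have hs : 0 < Real.sqrt (1 - x ^ 2) := Real.sqrt_pos.mpr h1x2
    have h1x : (0:ℝ) < 1 + x := by linarith
    have hlog : 0 < Real.log (1 + x) := Real.log_pos (by linarith)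
    have dlin : HasDerivAt (fun y : ℝ => 1 + y) 1 x := (hasDerivAt_id x).const_add 1
    have dlog : HasDerivAt (fun y : ℝ => Real.log (1 + y)) (1 / (1 + x)) x := by
      have := (Real.hasDerivAt_log (ne_of_gt h1x)).comp x dlin
      simpa [one_div, Function.comp_def] using this
    have d3 : HasDerivAt Real.arcsin (1 / Real.sqrt (1 - x ^ 2)) x :=
      Real.hasDerivAt_arcsin hxn1 hx1'
    have dq := d3.div dlog hlog.ne'
    rw [show deriv (fun r : ℝ => Real.arcsin r / Real.log (1 + r)) x = _ from dq.deriv]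
    apply div_pos
    · have key := aux_key_ineq ⟨hx0, hx1⟩
      have harcsin : 0 < Real.arcsin x := Real.arcsin_pos.mpr hx0
      rw [sub_pos,
        show Real.arcsin x * (1 / (1 + x)) = Real.arcsin x / (1 + x) by ring,
        show 1 / Real.sqrt (1 - x ^ 2) * Real.log (1 + x)
          = Real.log (1 + x) / Real.sqrt (1 - x ^ 2) by ring,
        div_lt_div_iff₀ h1x hs]
      nlinarith [key]
    · exact pow_pos hlog 2

private lemma aux_tendsto_zero :
    Tendsto (fun r : ℝ => Real.arcsin r / Real.log (1 + r)) (𝓝[>] 0) (𝓝 1) := by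
  have t1 : Tendsto (fun x : ℝ => Real.arcsin x / x) (𝓝[≠] (0:ℝ)) (𝓝 1) := by
    have h := Real.hasDerivAt_arcsin (by norm_num : (0:ℝ) ≠ -1) (by norm_num : (0:ℝ) ≠ 1)
    rw [hasDerivAt_iff_tendsto_slope] at h
    have hs : slope Real.arcsin 0 = fun x : ℝ => Real.arcsin x / x := by
      ext x
      simp [slope_def_field]
    rw [hs] at h
    have hv : 1 / Real.sqrt (1 - (0:ℝ) ^ 2) = 1 := by norm_num
    rwa [hv] at h
  have t2 : Tendsto (fun x : ℝ => Real.log (1 + x) / x) (𝓝[≠] (0:ℝ)) (𝓝 1) := by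
    have dlin : HasDerivAt (fun y : ℝ => 1 + y) 1 (0:ℝ) := (hasDerivAt_id 0).const_add 1
    have h : HasDerivAt (fun y : ℝ => Real.log (1 + y)) 1 (0:ℝ) := by
      have := (Real.hasDerivAt_log (by norm_num : (1:ℝ) + 0 ≠ 0)).comp 0 dlin
      simpa [Function.comp_def] using this
    rw [hasDerivAt_iff_tendsto_slope] at h
    have hs : slope (fun y : ℝ => Real.log (1 + y)) 0 = fun x : ℝ => Real.log (1 + x) / x := by
      ext x
      simp [slope_def_field]
    rwa [hs] at h
  have t12 := t1.div t2 one_ne_zero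
  have tsub : 𝓝[>] (0:ℝ) ≤ 𝓝[≠] (0:ℝ) :=
    nhdsWithin_mono 0 (fun x hx => ne_of_gt hx)
  have t := t12.mono_left tsub
  rw [show (1:ℝ) / 1 = 1 by norm_num] at t
  refine Tendsto.congr' ?_ t
  filter_upwards [Ioo_mem_nhdsGT_of_mem (⟨le_refl 0, one_pos⟩ : (0:ℝ) ∈ Ico 0 1)] with x hx
  have hx0 : (x:ℝ) ≠ 0 := ne_of_gt hx.1
  have hlogne : Real.log (1 + x) ≠ 0 := (Real.log_pos (by linarith [hx.1])).ne'
  simp only [Pi.div_apply]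
  field_simp

private lemma aux_tendsto_one :
    Tendsto (fun r : ℝ => Real.arcsin r / Real.log (1 + r)) (𝓝[<] 1)
      (𝓝 (π / Real.log 4)) := by
  have hden : Real.log ((1:ℝ) + 1) ≠ 0 := by
    rw [show (1:ℝ) + 1 = 2 by norm_num]
    exact (Real.log_pos one_lt_two).ne'
  have ct : ContinuousAt (fun r : ℝ => Real.arcsin r / Real.log (1 + r)) 1 := by
    apply ContinuousAt.div Real.continuous_arcsin.continuousAt
    · exact (Real.continuousAt_log (by norm_num)).comp (by fun_prop)
    · exact hden
  have t : Tendsto (fun r : ℝ => Real.arcsin r / Real.log (1 + r)) (𝓝[<] (1:ℝ))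
      (𝓝 (Real.arcsin 1 / Real.log (1 + 1))) := ct.tendsto.mono_left nhdsWithin_le_nhds
  convert t using 2
  rw [Real.arcsin_one, show (1:ℝ) + 1 = 2 by norm_num,
    show (4:ℝ) = 2 ^ 2 by norm_num, Real.log_pow]
  have hl2 : Real.log 2 ≠ 0 := (Real.log_pos one_lt_two).ne'
  push_cast
  field_simp

/-- `r ↦ arcsin r / log(1+r)` is strictly increasing on `(0,1)`, with limit `1` as
`r → 0⁺` and limit `π / log 4` as `r → 1⁻`; consequently
`log(1+r) ≤ arcsin r ≤ (π/log 4) log(1+r)` on `(0,1)`. -/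
theorem strictMonoOn_arcsin_div_log :
    StrictMonoOn (fun r : ℝ => Real.arcsin r / Real.log (1 + r)) (Ioo 0 1) ∧
    Tendsto (fun r : ℝ => Real.arcsin r / Real.log (1 + r)) (𝓝[>] 0) (𝓝 1) ∧
    Tendsto (fun r : ℝ => Real.arcsin r / Real.log (1 + r)) (𝓝[<] 1)
      (𝓝 (π / Real.log 4)) ∧
    ∀ r ∈ Ioo (0:ℝ) 1,
      Real.log (1 + r) ≤ Real.arcsin r ∧
      Real.arcsin r ≤ π / Real.log 4 * Real.log (1 + r) := by
  refine ⟨aux_mono, aux_tendsto_zero, aux_tendsto_one, ?_⟩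
  intro r hr
  have hlog : 0 < Real.log (1 + r) := Real.log_pos (by linarith [hr.1])
  have hle1 : 1 ≤ Real.arcsin r / Real.log (1 + r) := by
    refine le_of_tendsto aux_tendsto_zero ?_
    filter_upwards [Ioo_mem_nhdsGT_of_mem (⟨le_refl 0, hr.1⟩ : (0:ℝ) ∈ Ico 0 r)] with s hs
    exact (aux_mono ⟨hs.1, hs.2.trans hr.2⟩ hr hs.2).le
  have hle2 : Real.arcsin r / Real.log (1 + r) ≤ π / Real.log 4 := by
    refine ge_of_tendsto aux_tendsto_one ?_
    filter_upwards [Ioo_mem_nhdsLT_of_mem (⟨hr.2, le_refl 1⟩ : (1:ℝ) ∈ Ioc r 1)] with s hs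
    exact (aux_mono hr ⟨hr.1.trans hs.1, hs.2⟩ hs.1).le
  exact ⟨by simpa using (one_le_div hlog).mp hle1, (div_le_iff₀ hlog).mp hle2⟩
end

section
/- For L ≥ 1 and ε ∈ (0,1), the function f(r) = artanh(4L r)/artanh r is strictly increasing on (0, ε/(4L)), with limit 4L as r → 0⁺ and value artanh(ε)/artanh(ε/(4L)) at r = ε/(4L). In particular, artanh(4L r) ≤ (artanh ε / artanh(ε/(4L))) · artanh r for all r ∈ (0, ε/(4L)]. -/
open Real Set Filter Topology

/-- The inverse hyperbolic tangent. -/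
noncomputable def artanh (r : ℝ) : ℝ := (1 / 2) * Real.log ((1 + r) / (1 - r))

lemma artanh_zero : _root_.artanh 0 = 0 := by simp [_root_.artanh]

lemma hasDerivAt_artanh {x : ℝ} (h1 : -1 < x) (h2 : x < 1) :
    HasDerivAt _root_.artanh (1 / (1 - x ^ 2)) x := by
  have hp : 0 < 1 + x := by linarith
  have hm : 0 < 1 - x := by linarith
  have hA : HasDerivAt (fun y : ℝ => Real.log (1 + y)) (1 / (1 + x)) x := by
    have h := (Real.hasDerivAt_log hp.ne').comp x ((hasDerivAt_id x).const_add 1)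
    exact h.congr_deriv (by ring)
  have hB : HasDerivAt (fun y : ℝ => Real.log (1 - y)) (-(1 / (1 - x))) x := by
    have h := (Real.hasDerivAt_log hm.ne').comp x ((hasDerivAt_id x).const_sub 1)
    exact h.congr_deriv (by ring)
  have hg : HasDerivAt (fun y : ℝ => (1 / 2 : ℝ) * (Real.log (1 + y) - Real.log (1 - y)))
      ((1 / 2 : ℝ) * (1 / (1 + x) - -(1 / (1 - x)))) x := (hA.sub hB).const_mul (1 / 2)
  have hev : _root_.artanh =ᶠ[𝓝 x]
      fun y : ℝ => (1 / 2 : ℝ) * (Real.log (1 + y) - Real.log (1 - y)) := by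
    filter_upwards [Ioo_mem_nhds h1 h2] with y hy
    have hyp : 0 < 1 + y := by linarith [hy.1]
    have hym : 0 < 1 - y := by linarith [hy.2]
    unfold _root_.artanh
    rw [Real.log_div hyp.ne' hym.ne']
  have h := hg.congr_of_eventuallyEq hev
  refine h.congr_deriv ?_
  have e : (1:ℝ) - x ^ 2 ≠ 0 := by nlinarith
  field_simp
  ring

lemma artanh_lt_artanh {x y : ℝ} (hx : -1 < x) (hxy : x < y) (hy : y < 1) :
    _root_.artanh x < _root_.artanh y := by
  have h := strictMonoOn_of_deriv_pos (convex_Ioo (-1 : ℝ) 1)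
    (fun z hz => (hasDerivAt_artanh hz.1 hz.2).continuousAt.continuousWithinAt)
    (fun z hz => by
      rw [interior_Ioo] at hz
      rw [(hasDerivAt_artanh hz.1 hz.2).deriv]
      have : 0 < 1 - z ^ 2 := by nlinarith [hz.1, hz.2]
      positivity)
  exact h ⟨hx, by linarith⟩ ⟨by linarith, hy⟩ hxy

lemma artanh_pos {x : ℝ} (h0 : 0 < x) (h1 : x < 1) : 0 < _root_.artanh x := by
  have := artanh_lt_artanh (by norm_num : (-1:ℝ) < 0) h0 h1
  rwa [_root_.artanh_zero] at this

lemma hasDerivAt_artanh_comp (a : ℝ) {x : ℝ} (h1 : -1 < a * x) (h2 : a * x < 1) :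
    HasDerivAt (fun t : ℝ => _root_.artanh (a * t)) (a / (1 - (a * x) ^ 2)) x := by
  have h := (hasDerivAt_artanh h1 h2).comp x ((hasDerivAt_id x).const_mul a)
  refine h.congr_deriv ?_
  ring

lemma H_pos {a r : ℝ} (ha : 2 ≤ a) (hr : 0 < r) (har : a * r < 1) :
    (1 - (a * r) ^ 2) * _root_.artanh (a * r) < a * (1 - r ^ 2) * _root_.artanh r := by
  have ha0 : 0 < a := by linarith
  have hr1 : r < 1 := by nlinarith
  set F : ℝ → ℝ := fun s => a * (1 - s ^ 2) * _root_.artanh s - (1 - (a * s) ^ 2) * _root_.artanh (a * s)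
    with hF
  have key : ∀ s ∈ Icc (0 : ℝ) r,
      HasDerivAt F (2 * a * s * (a * _root_.artanh (a * s) - _root_.artanh s)) s := by
    intro s hs
    have hs0 : 0 ≤ s := hs.1
    have hsr : s ≤ r := hs.2
    have has2 : a * s < 1 := lt_of_le_of_lt (by nlinarith) har
    have has1 : -1 < a * s := by nlinarith
    have hs2 : s < 1 := by nlinarith
    have hs1 : -1 < s := by linarith
    have dA := (((hasDerivAt_pow 2 s).const_sub 1).const_mul a).mul
      (hasDerivAt_artanh hs1 hs2)
    have dB := ((((hasDerivAt_id s).const_mul a).pow 2).const_sub 1).mul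
      (hasDerivAt_artanh_comp a has1 has2)
    have dF := dA.sub dB
    refine dF.congr_deriv ?_
    have e1 : (1 : ℝ) - s ^ 2 ≠ 0 := by nlinarith
    have e2 : (1 : ℝ) - (a * s) ^ 2 ≠ 0 := by nlinarith
    simp only [Pi.pow_apply, id]
    have k1 : (1 - s ^ 2) * (1 / (1 - s ^ 2)) = 1 := mul_one_div_cancel e1
    have k2 : (1 - (a * s) ^ 2) * (a / (1 - (a * s) ^ 2)) = a := mul_div_cancel₀ a e2
    linear_combination a * k1 - k2
  have hmono : StrictMonoOn F (Icc 0 r) := by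
    apply strictMonoOn_of_deriv_pos (convex_Icc 0 r)
      (fun s hs => (key s hs).continuousAt.continuousWithinAt)
    intro s hs
    rw [interior_Icc] at hs
    rw [(key s (Ioo_subset_Icc_self hs)).deriv]
    have hs0 : 0 < s := hs.1
    have has2 : a * s < 1 := lt_of_le_of_lt (by nlinarith [hs.2]) har
    have hsas : s < a * s := by nlinarith
    have hlt : _root_.artanh s < _root_.artanh (a * s) := artanh_lt_artanh (by linarith) hsas has2
    have hposa : 0 < _root_.artanh (a * s) := artanh_pos (by positivity) has2
    have hgap : 0 < a * _root_.artanh (a * s) - _root_.artanh s := by nlinarith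
    have h2as : 0 < 2 * a * s := by positivity
    exact mul_pos h2as hgap
  have h0 : F 0 = 0 := by simp [hF, _root_.artanh_zero]
  have := hmono (left_mem_Icc.mpr hr.le) (right_mem_Icc.mpr hr.le) hr
  rw [h0] at this
  simp only [hF] at this
  linarith

/-- For `L ≥ 1` and `ε ∈ (0,1)`, `r ↦ artanh(4Lr)/artanh r` is strictly increasing on
`(0, ε/(4L))`, with limit `4L` as `r → 0⁺` and value `artanh ε / artanh(ε/(4L))` at
`r = ε/(4L)`; in particular `artanh(4Lr) ≤ (artanh ε / artanh(ε/(4L))) artanh r` on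
`(0, ε/(4L)]`. -/
theorem strictMonoOn_artanh_mul_div_artanh (L ε : ℝ) (hL : 1 ≤ L) (hε : ε ∈ Ioo (0:ℝ) 1) :
    StrictMonoOn (fun r : ℝ => _root_.artanh (4 * L * r) / _root_.artanh r) (Ioo 0 (ε / (4 * L))) ∧
    Tendsto (fun r : ℝ => _root_.artanh (4 * L * r) / _root_.artanh r) (𝓝[>] 0) (𝓝 (4 * L)) ∧
    _root_.artanh (4 * L * (ε / (4 * L))) / _root_.artanh (ε / (4 * L)) =
      _root_.artanh ε / _root_.artanh (ε / (4 * L)) ∧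
    ∀ r ∈ Ioc 0 (ε / (4 * L)),
      _root_.artanh (4 * L * r) ≤ _root_.artanh ε / _root_.artanh (ε / (4 * L)) * _root_.artanh r := by
  obtain ⟨hε0, hε1⟩ := hε
  set a := 4 * L with ha_def
  have ha4 : 4 ≤ a := by simp only [ha_def]; linarith
  have ha0 : 0 < a := by linarith
  set m := ε / a with hm_def
  have ham : a * m = ε := by rw [hm_def]; field_simp
  have hm0 : 0 < m := div_pos hε0 ha0
  have hm1 : m < 1 := by rw [hm_def, div_lt_one ha0]; linarith
  -- strict monotonicity on Ioc 0 m
  have hMono : StrictMonoOn (fun r : ℝ => _root_.artanh (a * r) / _root_.artanh r) (Ioc 0 m) := by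
    refine strictMonoOn_of_deriv_pos (convex_Ioc 0 m) (fun x hx => ?_) (fun x hx => ?_)
    · have hx0 : 0 < x := hx.1
      have hx1 : x < 1 := lt_of_le_of_lt hx.2 hm1
      have hax1 : a * x < 1 := by
        calc a * x ≤ a * m := by nlinarith [hx.2]
        _ = ε := ham
        _ < 1 := hε1
      have h1 := (hasDerivAt_artanh_comp a (by nlinarith) hax1).continuousAt
      have h2 := (hasDerivAt_artanh (by linarith) hx1).continuousAt
      exact (h1.div h2 (artanh_pos hx0 hx1).ne').continuousWithinAt
    · rw [interior_Ioc] at hx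
      have hx0 : 0 < x := hx.1
      have hx1 : x < 1 := (hx.2.trans hm1)
      have hax1 : a * x < 1 := by
        calc a * x < a * m := by nlinarith [hx.2]
        _ = ε := ham
        _ < 1 := hε1
      have hartx : 0 < _root_.artanh x := artanh_pos hx0 hx1
      have hd := (hasDerivAt_artanh_comp a (by nlinarith) hax1).div
        (hasDerivAt_artanh (by linarith) hx1) hartx.ne'
      rw [show deriv (fun r => _root_.artanh (a * r) / _root_.artanh r) x = _ from hd.deriv]
      have h1 : (0:ℝ) < 1 - x ^ 2 := by nlinarith
      have h2 : (0:ℝ) < 1 - (a * x) ^ 2 := by nlinarith [mul_pos ha0 hx0]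
      have key := H_pos (by linarith : (2:ℝ) ≤ a) hx0 hax1
      have hEq : a / (1 - (a * x) ^ 2) * _root_.artanh x - _root_.artanh (a * x) * (1 / (1 - x ^ 2))
          = (a * (1 - x ^ 2) * _root_.artanh x - (1 - (a * x) ^ 2) * _root_.artanh (a * x))
            / ((1 - (a * x) ^ 2) * (1 - x ^ 2)) := by
        rw [div_mul_eq_mul_div, mul_one_div, div_sub_div _ _ h2.ne' h1.ne']
        ring
      rw [hEq]
      exact div_pos (div_pos (by linarith) (mul_pos h2 h1)) (pow_pos hartx 2)
  -- limit
  have hslope : Tendsto (fun x : ℝ => _root_.artanh x / x) (𝓝[≠] (0:ℝ)) (𝓝 1) := by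
    have h0 : HasDerivAt _root_.artanh 1 0 := by
      have := hasDerivAt_artanh (by norm_num : (-1:ℝ) < 0) (by norm_num)
      simpa using this
    have h := hasDerivAt_iff_tendsto_slope.mp h0
    exact h.congr fun x => by rw [slope_def_field, _root_.artanh_zero, sub_zero, sub_zero]
  have hmap : Tendsto (fun r : ℝ => a * r) (𝓝[>] (0:ℝ)) (𝓝[≠] (0:ℝ)) := by
    apply tendsto_nhdsWithin_of_tendsto_nhds_of_eventually_within
    · have h : Tendsto (fun r : ℝ => a * r) (𝓝 (0:ℝ)) (𝓝 (a * 0)) :=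
        (continuous_const.mul continuous_id).tendsto (0:ℝ)
      rw [mul_zero] at h
      exact h.mono_left nhdsWithin_le_nhds
    · exact eventually_mem_nhdsWithin.mono fun r hr => (mul_pos ha0 hr).ne'
  have T1 : Tendsto (fun r : ℝ => _root_.artanh (a * r) / (a * r)) (𝓝[>] (0:ℝ)) (𝓝 1) :=
    hslope.comp hmap
  have T2 : Tendsto (fun r : ℝ => _root_.artanh r / r) (𝓝[>] (0:ℝ)) (𝓝 1) :=
    hslope.mono_left (nhdsWithin_mono 0 fun x hx => ne_of_gt hx)
  have T3 : Tendsto (fun r : ℝ => a * (_root_.artanh (a * r) / (a * r)) / (_root_.artanh r / r))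
      (𝓝[>] (0:ℝ)) (𝓝 (a * 1 / 1)) := (T1.const_mul a).div T2 one_ne_zero
  have hLim : Tendsto (fun r : ℝ => _root_.artanh (a * r) / _root_.artanh r) (𝓝[>] (0:ℝ)) (𝓝 a) := by
    have hEq : (fun r : ℝ => a * (_root_.artanh (a * r) / (a * r)) / (_root_.artanh r / r))
        =ᶠ[𝓝[>] (0:ℝ)] fun r : ℝ => _root_.artanh (a * r) / _root_.artanh r := by
      filter_upwards [Ioo_mem_nhdsGT_of_mem ⟨le_refl (0:ℝ), hm0⟩] with r hr
      have hr0 : (0:ℝ) < r := hr.1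
      have hr1 : r < 1 := hr.2.trans hm1
      have hart : _root_.artanh r ≠ 0 := (artanh_pos hr0 hr1).ne'
      field_simp
    have := T3.congr' hEq
    simpa using this
  refine ⟨hMono.mono Ioo_subset_Ioc_self, hLim, by rw [ham], ?_⟩
  intro r hr
  have hr0 : 0 < r := hr.1
  have hr1 : r < 1 := lt_of_le_of_lt hr.2 hm1
  have hart : 0 < _root_.artanh r := artanh_pos hr0 hr1
  have hle : _root_.artanh (a * r) / _root_.artanh r ≤ _root_.artanh (a * m) / _root_.artanh m := by
    exact hMono.monotoneOn ⟨hr.1, hr.2⟩ ⟨hm0, le_refl m⟩ hr.2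
  rw [ham] at hle
  calc _root_.artanh (a * r) = _root_.artanh (a * r) / _root_.artanh r * _root_.artanh r :=
        (div_mul_cancel₀ _ hart.ne').symm
    _ ≤ _root_.artanh ε / _root_.artanh m * _root_.artanh r := mul_le_mul_of_nonneg_right hle hart.le
end

section
/- (Monotone l'Hôpital rule) Let −∞ < a < b < ∞ and f, g : [a,b] → ℝ continuous on [a,b] and differentiable on (a,b) with g'(x) ≠ 0 on (a,b). If f'/g' is (strictly) increasing on (a,b), then the functions x ↦ (f(x)−f(a))/(g(x)−g(a)) and x ↦ (f(x)−f(b))/(g(x)−g(b)) are (strictly) increasing on (a,b); analogously for decreasing. -/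
open Real Set

private lemma deriv_nonneg_of_smo {g : ℝ → ℝ} {c a b x : ℝ} (hx : x ∈ Ioo a b)
    (hm : StrictMonoOn g (Icc a b)) (hd : HasDerivAt g c x) : 0 ≤ c := by
  have h := hasDerivAt_iff_tendsto_slope.mp hd
  have h2 : Filter.Tendsto (slope g x) (nhdsWithin x (Ioi x)) (nhds c) :=
    h.mono_left (nhdsWithin_mono x fun y hy => Set.mem_compl_singleton_iff.mpr (ne_of_gt hy))
  refine ge_of_tendsto h2 ?_
  filter_upwards [Ioo_mem_nhdsGT_of_mem (Set.mem_Ico.mpr ⟨le_refl x, hx.2⟩)] with y hy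
  have hgy : g x < g y := hm ⟨hx.1.le, hx.2.le⟩ ⟨hx.1.le.trans hy.1.le, hy.2.le⟩ hy.1
  rw [slope_def_field]
  exact div_nonneg (by linarith) (by linarith [hy.1])

private lemma mono_key (a b : ℝ) (hab : a < b) (f g f' g' : ℝ → ℝ)
    (hf : ContinuousOn f (Icc a b)) (hg : ContinuousOn g (Icc a b))
    (hf' : ∀ x ∈ Ioo a b, HasDerivAt f (f' x) x)
    (hg' : ∀ x ∈ Ioo a b, HasDerivAt g (g' x) x)
    (hg'0 : ∀ x ∈ Ioo a b, g' x ≠ 0) :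
    (MonotoneOn (fun x => f' x / g' x) (Ioo a b) →
      MonotoneOn (fun x => (f x - f a) / (g x - g a)) (Ioo a b) ∧
      MonotoneOn (fun x => (f x - f b) / (g x - g b)) (Ioo a b)) ∧
    (StrictMonoOn (fun x => f' x / g' x) (Ioo a b) →
      StrictMonoOn (fun x => (f x - f a) / (g x - g a)) (Ioo a b) ∧
      StrictMonoOn (fun x => (f x - f b) / (g x - g b)) (Ioo a b)) := by
  have hne : ∀ u v : ℝ, u ∈ Icc a b → v ∈ Icc a b → u < v → g u ≠ g v := by
    intro u v hu hv huv heq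
    obtain ⟨c, hc, hc0⟩ := exists_hasDerivAt_eq_zero huv
      (hg.mono (Icc_subset_Icc hu.1 hv.2)) heq
      (fun x hx => hg' x ⟨lt_of_le_of_lt hu.1 hx.1, lt_of_lt_of_le hx.2 hv.2⟩)
    exact hg'0 c ⟨lt_of_le_of_lt hu.1 hc.1, lt_of_lt_of_le hc.2 hv.2⟩ hc0
  have hDa : ∀ x ∈ Ioo a b, g x - g a ≠ 0 := fun x hx =>
    sub_ne_zero.mpr (hne a x ⟨le_rfl, hab.le⟩ ⟨hx.1.le, hx.2.le⟩ hx.1).symm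
  have hDb : ∀ x ∈ Ioo a b, g x - g b ≠ 0 := fun x hx =>
    sub_ne_zero.mpr (hne x b ⟨hx.1.le, hx.2.le⟩ ⟨hab.le, le_rfl⟩ hx.2)
  have hinj : InjOn g (Icc a b) := by
    intro u hu v hv heq
    by_contra hne'
    rcases lt_or_gt_of_ne hne' with h | h
    · exact hne u v hu hv h heq
    · exact hne v u hv hu h heq.symm
  have hsign : ∀ x ∈ Ioo a b, 0 < g' x * (g x - g a) ∧ g' x * (g x - g b) < 0 := by
    intro x hx
    have hxm : x ∈ Icc a b := ⟨hx.1.le, hx.2.le⟩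
    rcases hg.strictMonoOn_of_injOn_Icc' hab.le hinj with hm | hm
    · have h1 : g a < g x := hm (left_mem_Icc.mpr hab.le) hxm hx.1
      have h2 : g x < g b := hm hxm (right_mem_Icc.mpr hab.le) hx.2
      have h3 : 0 < g' x :=
        lt_of_le_of_ne (deriv_nonneg_of_smo hx hm (hg' x hx)) (Ne.symm (hg'0 x hx))
      exact ⟨mul_pos h3 (by linarith), mul_neg_of_pos_of_neg h3 (by linarith)⟩
    · have h1 : g x < g a := hm (left_mem_Icc.mpr hab.le) hxm hx.1
      have h2 : g b < g x := hm hxm (right_mem_Icc.mpr hab.le) hx.2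
      have hsm : StrictMonoOn (fun y => -g y) (Icc a b) := fun u hu v hv huv =>
        neg_lt_neg (hm hu hv huv)
      have h3 : g' x < 0 := by
        have h4 := deriv_nonneg_of_smo hx hsm ((hg' x hx).neg)
        rcases lt_or_eq_of_le (by linarith : g' x ≤ 0) with h | h
        · exact h
        · exact absurd h (hg'0 x hx)
      exact ⟨mul_pos_of_neg_of_neg h3 (by linarith), mul_neg_of_neg_of_pos h3 (by linarith)⟩
  have hA : ∀ x ∈ Ioo a b, ∃ c ∈ Ioo a b, c < x ∧
      (f x - f a) / (g x - g a) = f' c / g' c := by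
    intro x hx
    obtain ⟨c, hc, hceq⟩ := exists_ratio_hasDerivAt_eq_ratio_slope f f' hx.1
      (hf.mono (Icc_subset_Icc le_rfl hx.2.le))
      (fun y hy => hf' y ⟨hy.1, hy.2.trans hx.2⟩) g g'
      (hg.mono (Icc_subset_Icc le_rfl hx.2.le))
      (fun y hy => hg' y ⟨hy.1, hy.2.trans hx.2⟩)
    have hcab : c ∈ Ioo a b := ⟨hc.1, hc.2.trans hx.2⟩
    refine ⟨c, hcab, hc.2, ?_⟩
    rw [div_eq_div_iff (hDa x hx) (hg'0 c hcab)]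
    linear_combination -hceq
  have hB : ∀ x ∈ Ioo a b, ∃ c ∈ Ioo a b, x < c ∧
      (f x - f b) / (g x - g b) = f' c / g' c := by
    intro x hx
    obtain ⟨c, hc, hceq⟩ := exists_ratio_hasDerivAt_eq_ratio_slope f f' hx.2
      (hf.mono (Icc_subset_Icc hx.1.le le_rfl))
      (fun y hy => hf' y ⟨hx.1.trans hy.1, hy.2⟩) g g'
      (hg.mono (Icc_subset_Icc hx.1.le le_rfl))
      (fun y hy => hg' y ⟨hx.1.trans hy.1, hy.2⟩)
    have hcab : c ∈ Ioo a b := ⟨hx.1.trans hc.1, hc.2⟩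
    refine ⟨c, hcab, hc.1, ?_⟩
    rw [div_eq_div_iff (hDb x hx) (hg'0 c hcab)]
    linear_combination hceq
  have hDerA : ∀ x ∈ Ioo a b, HasDerivAt (fun y => (f y - f a) / (g y - g a))
      ((f' x * (g x - g a) - (f x - f a) * g' x) / (g x - g a) ^ 2) x := fun x hx =>
    ((hf' x hx).sub_const (f a)).div ((hg' x hx).sub_const (g a)) (hDa x hx)
  have hDerB : ∀ x ∈ Ioo a b, HasDerivAt (fun y => (f y - f b) / (g y - g b))
      ((f' x * (g x - g b) - (f x - f b) * g' x) / (g x - g b) ^ 2) x := fun x hx =>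
    ((hf' x hx).sub_const (f b)).div ((hg' x hx).sub_const (g b)) (hDb x hx)
  -- numerator rewriting
  have hfactA : ∀ x ∈ Ioo a b, ∀ c ∈ Ioo a b,
      (f x - f a) / (g x - g a) = f' c / g' c →
      f' x * (g x - g a) - (f x - f a) * g' x
        = (g' x * (g x - g a)) * (f' x / g' x - f' c / g' c) := by
    intro x hx c hc hEq
    have h1 : f x - f a = f' c / g' c * (g x - g a) := (div_eq_iff (hDa x hx)).mp hEq
    have hx0 := hg'0 x hx
    have hc0 := hg'0 c hc
    rw [h1]
    field_simp
  have hfactB : ∀ x ∈ Ioo a b, ∀ c ∈ Ioo a b,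
      (f x - f b) / (g x - g b) = f' c / g' c →
      f' x * (g x - g b) - (f x - f b) * g' x
        = (g' x * (g x - g b)) * (f' x / g' x - f' c / g' c) := by
    intro x hx c hc hEq
    have h1 : f x - f b = f' c / g' c * (g x - g b) := (div_eq_iff (hDb x hx)).mp hEq
    have hx0 := hg'0 x hx
    have hc0 := hg'0 c hc
    rw [h1]
    field_simp
  constructor
  · intro hmono
    constructor
    · apply monotoneOn_of_deriv_nonneg (convex_Ioo a b)
        (fun x hx => (hDerA x hx).continuousAt.continuousWithinAt)
        (fun x hx => by
          rw [interior_Ioo] at hx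
          exact (hDerA x hx).differentiableAt.differentiableWithinAt)
      intro x hx
      rw [interior_Ioo] at hx
      rw [(hDerA x hx).deriv]
      obtain ⟨c, hcab, hcx, hEq⟩ := hA x hx
      rw [hfactA x hx c hcab hEq]
      refine div_nonneg (mul_nonneg (hsign x hx).1.le ?_) (sq_nonneg _)
      exact sub_nonneg.mpr (hmono hcab hx hcx.le)
    · apply monotoneOn_of_deriv_nonneg (convex_Ioo a b)
        (fun x hx => (hDerB x hx).continuousAt.continuousWithinAt)
        (fun x hx => by
          rw [interior_Ioo] at hx
          exact (hDerB x hx).differentiableAt.differentiableWithinAt)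
      intro x hx
      rw [interior_Ioo] at hx
      rw [(hDerB x hx).deriv]
      obtain ⟨c, hcab, hcx, hEq⟩ := hB x hx
      rw [hfactB x hx c hcab hEq]
      refine div_nonneg ?_ (sq_nonneg _)
      have h1 := (hsign x hx).2
      have h2 : f' x / g' x - f' c / g' c ≤ 0 := sub_nonpos.mpr (hmono hx hcab hcx.le)
      nlinarith
  · intro hmono
    constructor
    · apply strictMonoOn_of_deriv_pos (convex_Ioo a b)
        (fun x hx => (hDerA x hx).continuousAt.continuousWithinAt)
      intro x hx
      rw [interior_Ioo] at hx
      rw [(hDerA x hx).deriv]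
      obtain ⟨c, hcab, hcx, hEq⟩ := hA x hx
      rw [hfactA x hx c hcab hEq]
      refine div_pos (mul_pos (hsign x hx).1 ?_)
        (lt_of_le_of_ne (sq_nonneg _) (Ne.symm (pow_ne_zero 2 (hDa x hx))))
      exact sub_pos.mpr (hmono hcab hx hcx)
    · apply strictMonoOn_of_deriv_pos (convex_Ioo a b)
        (fun x hx => (hDerB x hx).continuousAt.continuousWithinAt)
      intro x hx
      rw [interior_Ioo] at hx
      rw [(hDerB x hx).deriv]
      obtain ⟨c, hcab, hcx, hEq⟩ := hB x hx
      rw [hfactB x hx c hcab hEq]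
      refine div_pos ?_
        (lt_of_le_of_ne (sq_nonneg _) (Ne.symm (pow_ne_zero 2 (hDb x hx))))
      have h1 := (hsign x hx).2
      have h2 : f' x / g' x - f' c / g' c < 0 := sub_neg.mpr (hmono hx hcab hcx)
      nlinarith

/-- Monotone form of l'Hôpital's rule. Suppose `f, g : [a,b] → ℝ` are continuous on `[a,b]`,
differentiable on `(a,b)` with derivatives `f'`, `g'`, where `g' ≠ 0` on `(a,b)`. If
`f'/g'` is (strictly) increasing (resp. decreasing) on `(a,b)`, so are
`x ↦ (f x − f a)/(g x − g a)` and `x ↦ (f x − f b)/(g x − g b)`. -/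
theorem monotone_lhopital (a b : ℝ) (hab : a < b) (f g f' g' : ℝ → ℝ)
    (hf : ContinuousOn f (Icc a b)) (hg : ContinuousOn g (Icc a b))
    (hf' : ∀ x ∈ Ioo a b, HasDerivAt f (f' x) x)
    (hg' : ∀ x ∈ Ioo a b, HasDerivAt g (g' x) x)
    (hg'0 : ∀ x ∈ Ioo a b, g' x ≠ 0) :
    (MonotoneOn (fun x => f' x / g' x) (Ioo a b) →
      MonotoneOn (fun x => (f x - f a) / (g x - g a)) (Ioo a b) ∧
      MonotoneOn (fun x => (f x - f b) / (g x - g b)) (Ioo a b)) ∧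
    (StrictMonoOn (fun x => f' x / g' x) (Ioo a b) →
      StrictMonoOn (fun x => (f x - f a) / (g x - g a)) (Ioo a b) ∧
      StrictMonoOn (fun x => (f x - f b) / (g x - g b)) (Ioo a b)) ∧
    (AntitoneOn (fun x => f' x / g' x) (Ioo a b) →
      AntitoneOn (fun x => (f x - f a) / (g x - g a)) (Ioo a b) ∧
      AntitoneOn (fun x => (f x - f b) / (g x - g b)) (Ioo a b)) ∧
    (StrictAntiOn (fun x => f' x / g' x) (Ioo a b) →
      StrictAntiOn (fun x => (f x - f a) / (g x - g a)) (Ioo a b) ∧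
      StrictAntiOn (fun x => (f x - f b) / (g x - g b)) (Ioo a b)) := by
  have key := mono_key a b hab f g f' g' hf hg hf' hg' hg'0
  have keyN := mono_key a b hab (fun x => -f x) g (fun x => -f' x) g'
    hf.neg hg (fun x hx => (hf' x hx).neg) hg' hg'0
  refine ⟨key.1, key.2, ?_, ?_⟩
  · intro hanti
    have hmono' : MonotoneOn (fun x => -f' x / g' x) (Ioo a b) := by
      intro x hx y hy hxy
      have h := hanti hx hy hxy
      simp only [neg_div]
      exact neg_le_neg h
    obtain ⟨h1, h2⟩ := keyN.1 hmono'
    constructor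
    · intro x hx y hy hxy
      have h := h1 hx hy hxy
      simp only [] at h
      rw [show -f y - -f a = -(f y - f a) by ring, show -f x - -f a = -(f x - f a) by ring,
        neg_div, neg_div, neg_le_neg_iff] at h
      exact h
    · intro x hx y hy hxy
      have h := h2 hx hy hxy
      simp only [] at h
      rw [show -f y - -f b = -(f y - f b) by ring, show -f x - -f b = -(f x - f b) by ring,
        neg_div, neg_div, neg_le_neg_iff] at h
      exact h
  · intro hanti
    have hmono' : StrictMonoOn (fun x => -f' x / g' x) (Ioo a b) := by
      intro x hx y hy hxy
      have h := hanti hx hy hxy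
      simp only [neg_div]
      exact neg_lt_neg h
    obtain ⟨h1, h2⟩ := keyN.2 hmono'
    constructor
    · intro x hx y hy hxy
      have h := h1 hx hy hxy
      simp only [] at h
      rw [show -f y - -f a = -(f y - f a) by ring, show -f x - -f a = -(f x - f a) by ring,
        neg_div, neg_div, neg_lt_neg_iff] at h
      exact h
    · intro x hx y hy hxy
      have h := h2 hx hy hxy
      simp only [] at h
      rw [show -f y - -f b = -(f y - f b) by ring, show -f x - -f b = -(f x - f b) by ring,
        neg_div, neg_div, neg_lt_neg_iff] at h
      exact h
end
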